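/- For a numerical semigroup S with atoms n_1 < ... < n_k and gcd 1, min Δ(S) = gcd(n_2 - n_1, n_3 - n_2, ..., n_k - n_{k-1}). -/

import Mathlib

open Finset

namespace LengthDensity

/-- The set of factorizations of `n` with respect to generators `g`. -/
def facs {k : ℕ} (g : Fin k → ℕ) (n : ℕ) : Set (Fin k → ℕ) :=
  {z | ∑ i, z i * g i = n}

/-- Membership in the numerical semigroup generated by `g`. -/
def mem {k : ℕ} (g : Fin k → ℕ) (n : ℕ) : Prop := (facs g n).Nonempty

/-- The set of factorization lengths of `n`. -/
def lengthSet {k : ℕ} (g : Fin k → ℕ) (n : ℕ) : Set ℕ :=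
  (fun z => ∑ i, z i) '' facs g n

/-- Length density of an element. -/
noncomputable def LD {k : ℕ} (g : Fin k → ℕ) (n : ℕ) : ℝ :=
  (((lengthSet g n).ncard : ℝ) - 1) /
    (((sSup (lengthSet g n) : ℕ) : ℝ) - ((sInf (lengthSet g n) : ℕ) : ℝ))

/-- Length density of the semigroup: infimum of `LD` over elements with
non-singleton length set. -/
noncomputable def LDsgp {k : ℕ} (g : Fin k → ℕ) : ℝ :=
  sInf {x : ℝ | ∃ n : ℕ, 2 ≤ (lengthSet g n).ncard ∧ x = LD g n}

/-- The delta set (successive gaps) of a set of naturals. -/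
def deltaOf (L : Set ℕ) : Set ℕ :=
  {d | ∃ a ∈ L, ∃ b ∈ L, a < b ∧ (∀ c ∈ L, ¬(a < c ∧ c < b)) ∧ d = b - a}

/-- The delta set of an element. -/
def delta {k : ℕ} (g : Fin k → ℕ) (n : ℕ) : Set ℕ := deltaOf (lengthSet g n)

/-- The delta set of the semigroup. -/
def Delta {k : ℕ} (g : Fin k → ℕ) : Set ℕ := ⋃ n : ℕ, delta g n

/-- Adjacency in the factorization graph of `n`: two factorizations of `n`
sharing a positive coordinate. -/
def adj {k : ℕ} (g : Fin k → ℕ) (n : ℕ) (z z' : Fin k → ℕ) : Prop :=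
  z ∈ facs g n ∧ z' ∈ facs g n ∧ ∃ i, 0 < z i ∧ 0 < z' i

/-- `n` is a Betti element: its factorization graph is disconnected. -/
def IsBetti {k : ℕ} (g : Fin k → ℕ) (n : ℕ) : Prop :=
  ∃ z ∈ facs g n, ∃ z' ∈ facs g n, ¬ Relation.ReflTransGen (adj g n) z z'

/-- The semigroup is tasty: `LD(S) > 1 / max Δ(S)`. -/
def Tasty {k : ℕ} (g : Fin k → ℕ) : Prop := LDsgp g > 1 / ((sSup (Delta g) : ℕ) : ℝ)

/-- The semigroup is bland: `LD(S) = 1 / max Δ(S)`. -/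
def Bland {k : ℕ} (g : Fin k → ℕ) : Prop := LDsgp g = 1 / ((sSup (Delta g) : ℕ) : ℝ)

/-- `g` is a minimal generating set: no generator is a nonnegative integer
combination of the others. -/
def IsMinGen {k : ℕ} (g : Fin k → ℕ) : Prop :=
  ∀ i, ¬ ∃ z : Fin k → ℕ, z i = 0 ∧ ∑ j, z j * g j = g i

/-- `n` is a non-atom of the semigroup generated by `g`:
it is a sum of two nonzero elements. -/
def NonAtom {k : ℕ} (g : Fin k → ℕ) (n : ℕ) : Prop :=
  ∃ a b : ℕ, 0 < a ∧ 0 < b ∧ mem g a ∧ mem g b ∧ n = a + b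

lemma exists_bezout {ι : Type*} [DecidableEq ι] (s : Finset ι) (f : ι → ℕ) :
    ∃ c : ι → ℤ, ∑ i ∈ s, c i * (f i : ℤ) = ((s.gcd f : ℕ) : ℤ) := by
  induction s using Finset.induction_on with
  | empty => exact ⟨0, by simp⟩
  | @insert a s ha ih =>
    obtain ⟨c, hc⟩ := ih
    refine ⟨fun i => if i = a then Nat.gcdA (f a) (s.gcd f)
      else Nat.gcdB (f a) (s.gcd f) * c i, ?_⟩
    rw [Finset.sum_insert ha, Finset.gcd_insert]
    have h1 : ∑ i ∈ s, (if i = a then Nat.gcdA (f a) (s.gcd f)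
        else Nat.gcdB (f a) (s.gcd f) * c i) * (f i : ℤ)
        = Nat.gcdB (f a) (s.gcd f) * ∑ i ∈ s, c i * (f i : ℤ) := by
      rw [Finset.mul_sum]
      refine Finset.sum_congr rfl fun i hi => ?_
      rw [if_neg (by rintro rfl; exact ha hi), mul_assoc]
    have h2 : GCDMonoid.gcd (f a) (s.gcd f) = Nat.gcd (f a) (s.gcd f) := rfl
    simp only [eq_self_iff_true, if_true]
    rw [h1, hc, h2, Nat.gcd_eq_gcd_ab]
    ring

theorem stmt0 (k : ℕ) (hk : 1 ≤ k) (g : Fin (k + 1) → ℕ)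
    (hmono : StrictMono g) (hpos : 0 < g 0)
    (hgcd : Finset.univ.gcd g = 1) (hmin : IsMinGen g) :
    sInf (Delta g) =
      Finset.univ.gcd (fun i : Fin k => g i.succ - g i.castSucc) := by
  classical
  set d : ℕ := Finset.univ.gcd (fun i : Fin k => g i.succ - g i.castSucc) with hd
  -- positivity of consecutive differences
  have hlt : ∀ i : Fin k, g i.castSucc < g i.succ :=
    fun i => hmono Fin.castSucc_lt_succ
  have hd0 : 0 < d := by
    rcases Nat.eq_zero_or_pos d with h | h
    · exfalso
      rw [hd] at h
      have := Finset.gcd_eq_zero_iff.mp h ⟨0, hk⟩ (Finset.mem_univ _)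
      have h2 := hlt ⟨0, hk⟩
      omega
    · exact h
  -- d divides every consecutive difference (ℤ version)
  have hdvd_diff : ∀ i : Fin k, (d : ℤ) ∣ (g i.succ : ℤ) - (g i.castSucc : ℤ) := by
    intro i
    have h1 : d ∣ g i.succ - g i.castSucc :=
      hd ▸ Finset.gcd_dvd (Finset.mem_univ i)
    have := Int.natCast_dvd_natCast.mpr h1
    rwa [Nat.cast_sub (le_of_lt (hlt i))] at this
  -- d divides g j - g 0 for every j
  have hdvd0 : ∀ j : Fin (k + 1), (d : ℤ) ∣ (g j : ℤ) - (g 0 : ℤ) := by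
    have key : ∀ m : ℕ, ∀ hm : m < k + 1, (d : ℤ) ∣ (g ⟨m, hm⟩ : ℤ) - (g 0 : ℤ) := by
      intro m
      induction m with
      | zero =>
        intro hm
        have : (⟨0, hm⟩ : Fin (k + 1)) = 0 := rfl
        simp [this]
      | succ m ih =>
        intro hm
        have hm' : m < k + 1 := by omega
        have hmk : m < k := by omega
        have h1 : (d : ℤ) ∣ (g ⟨m + 1, hm⟩ : ℤ) - (g ⟨m, hm'⟩ : ℤ) := by
          have := hdvd_diff ⟨m, hmk⟩
          have e1 : (⟨m, hmk⟩ : Fin k).succ = (⟨m + 1, hm⟩ : Fin (k + 1)) := rfl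
          have e2 : (⟨m, hmk⟩ : Fin k).castSucc = (⟨m, hm'⟩ : Fin (k + 1)) := rfl
          rwa [e1, e2] at this
        have h2 := ih hm'
        have : (g ⟨m + 1, hm⟩ : ℤ) - (g 0 : ℤ)
            = ((g ⟨m + 1, hm⟩ : ℤ) - (g ⟨m, hm'⟩ : ℤ)) + ((g ⟨m, hm'⟩ : ℤ) - (g 0 : ℤ)) := by
          ring
        rw [this]
        exact dvd_add h1 h2
    intro j
    have := key j.1 j.2
    simpa using this
  -- d is coprime to g 0
  have hcop : Nat.gcd d (g 0) = 1 := by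
    have hc1 : ∀ j : Fin (k + 1), Nat.gcd d (g 0) ∣ g j := by
      intro j
      have h1 : (Nat.gcd d (g 0) : ℤ) ∣ (g j : ℤ) - (g 0 : ℤ) :=
        dvd_trans (Int.natCast_dvd_natCast.mpr (Nat.gcd_dvd_left _ _)) (hdvd0 j)
      have h2 : (Nat.gcd d (g 0) : ℤ) ∣ (g 0 : ℤ) :=
        Int.natCast_dvd_natCast.mpr (Nat.gcd_dvd_right _ _)
      have h3 : (Nat.gcd d (g 0) : ℤ) ∣ (g j : ℤ) := by
        have := dvd_add h1 h2
        simpa using this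
      exact Int.natCast_dvd_natCast.mp h3
    have := Finset.dvd_gcd (fun j (_ : j ∈ Finset.univ) => hc1 j)
    rw [hgcd] at this
    exact Nat.dvd_one.mp this
  have hcopZ : IsCoprime (d : ℤ) (g 0 : ℤ) := by
    rw [Int.isCoprime_iff_gcd_eq_one, Int.gcd_natCast_natCast]
    exact hcop
  -- two lengths of the same element differ by a multiple of d
  have hcongr : ∀ n : ℕ, ∀ ℓ ∈ lengthSet g n, (d : ℤ) ∣ (n : ℤ) - (ℓ : ℤ) * (g 0 : ℤ) := by
    rintro n ℓ ⟨z, hz, rfl⟩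
    have hzn : ∑ i, z i * g i = n := hz
    have e : (n : ℤ) - ((∑ i, z i : ℕ) : ℤ) * (g 0 : ℤ)
        = ∑ i, (z i : ℤ) * ((g i : ℤ) - (g 0 : ℤ)) := by
      rw [← hzn]
      push_cast
      rw [Finset.sum_mul, ← Finset.sum_sub_distrib]
      refine Finset.sum_congr rfl fun i _ => by ring
    rw [e]
    exact Finset.dvd_sum fun i _ => Dvd.dvd.mul_left (hdvd0 i) _
  have hkey : ∀ n a b : ℕ, a ∈ lengthSet g n → b ∈ lengthSet g n →
      (d : ℤ) ∣ (b : ℤ) - (a : ℤ) := by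
    intro n a b ha hb
    have h1 := hcongr n a ha
    have h2 := hcongr n b hb
    have h3 : (d : ℤ) ∣ ((b : ℤ) - (a : ℤ)) * (g 0 : ℤ) := by
      have := dvd_sub h1 h2
      have e : ((n : ℤ) - (a : ℤ) * (g 0 : ℤ)) - ((n : ℤ) - (b : ℤ) * (g 0 : ℤ))
          = ((b : ℤ) - (a : ℤ)) * (g 0 : ℤ) := by ring
      rwa [e] at this
    exact hcopZ.dvd_of_dvd_mul_right h3
  -- d is a lower bound for Delta g
  have hlb : ∀ x ∈ Delta g, d ≤ x := by
    intro x hx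
    rcases Set.mem_iUnion.mp hx with ⟨n, a, ha, b, hb, hab, _, rfl⟩
    have h1 := hkey n a b ha hb
    have h2 : 0 < (b : ℤ) - (a : ℤ) := by
      have : a < b := hab
      omega
    have h3 : (d : ℤ) ≤ (b : ℤ) - (a : ℤ) := Int.le_of_dvd h2 h1
    omega
  -- construct an element realizing the gap d
  obtain ⟨c, hc⟩ := exists_bezout (Finset.univ : Finset (Fin k))
    (fun i => g i.succ - g i.castSucc)
  have hcZ : ∑ i : Fin k, c i * ((g i.succ : ℤ) - (g i.castSucc : ℤ)) = (d : ℤ) := by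
    rw [← hc]
    refine Finset.sum_congr rfl fun i _ => ?_
    rw [Nat.cast_sub (le_of_lt (hlt i))]
  set w : Fin (k + 1) → ℤ := fun j => ∑ i : Fin k,
    (-(g 0 : ℤ) * c i) * ((if j = i.succ then 1 else 0) - (if j = i.castSucc then 1 else 0))
    with hw
  have hw_sum : ∑ j, w j = 0 := by
    rw [hw, Finset.sum_comm]
    refine Finset.sum_eq_zero fun i _ => ?_
    rw [← Finset.mul_sum, Finset.sum_sub_distrib]
    simp
  have hw_g : ∑ j, w j * (g j : ℤ) = -(g 0 : ℤ) * (d : ℤ) := by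
    rw [hw]
    have e : ∀ j : Fin (k+1), (∑ i : Fin k,
        (-(g 0 : ℤ) * c i) * ((if j = i.succ then 1 else 0) - (if j = i.castSucc then 1 else 0)))
          * (g j : ℤ)
        = ∑ i : Fin k, (-(g 0 : ℤ) * c i) *
          ((if j = i.succ then 1 else 0) - (if j = i.castSucc then 1 else 0)) * (g j : ℤ) :=
      fun j => Finset.sum_mul _ _ _
    simp only [e]
    rw [Finset.sum_comm]
    have e2 : ∀ i : Fin k, ∑ j : Fin (k+1), (-(g 0 : ℤ) * c i) *
          ((if j = i.succ then 1 else 0) - (if j = i.castSucc then 1 else 0)) * (g j : ℤ)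
        = (-(g 0 : ℤ) * c i) * ((g i.succ : ℤ) - (g i.castSucc : ℤ)) := by
      intro i
      have e3 : ∀ j : Fin (k+1), (-(g 0 : ℤ) * c i) *
          ((if j = i.succ then 1 else 0) - (if j = i.castSucc then 1 else 0)) * (g j : ℤ)
          = (-(g 0 : ℤ) * c i) * ((if j = i.succ then (g j : ℤ) else 0)
            - (if j = i.castSucc then (g j : ℤ) else 0)) := by
        intro j
        split <;> split <;> ring
      simp only [e3]
      rw [← Finset.mul_sum, Finset.sum_sub_distrib]
      simp
    simp only [e2]
    calc ∑ i : Fin k, -(g 0 : ℤ) * c i * ((g i.succ : ℤ) - (g i.castSucc : ℤ))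
        = -(g 0 : ℤ) * ∑ i : Fin k, c i * ((g i.succ : ℤ) - (g i.castSucc : ℤ)) := by
          rw [Finset.mul_sum]; exact Finset.sum_congr rfl fun i _ => by ring
      _ = -(g 0 : ℤ) * (d : ℤ) := by rw [hcZ]
  set v : Fin (k + 1) → ℤ := fun j => w j + if j = 0 then (d : ℤ) else 0 with hv
  have hv_sum : ∑ j, v j = (d : ℤ) := by
    rw [hv]
    rw [Finset.sum_add_distrib, hw_sum]
    simp
  have hv_g : ∑ j, v j * (g j : ℤ) = 0 := by
    rw [hv]
    have e : ∀ j : Fin (k+1), (w j + if j = 0 then (d : ℤ) else 0) * (g j : ℤ)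
        = w j * (g j : ℤ) + (if j = 0 then (d : ℤ) * (g j : ℤ) else 0) := by
      intro j; split <;> ring
    simp only [e]
    rw [Finset.sum_add_distrib, hw_g]
    simp
    ring
  set z : Fin (k + 1) → ℕ := fun j => (-(v j)).toNat with hzdef
  set z' : Fin (k + 1) → ℕ := fun j => (v j).toNat with hz'def
  have hzz' : ∀ j, (z' j : ℤ) - (z j : ℤ) = v j := by
    intro j
    rw [hzdef, hz'def]
    exact Int.toNat_sub_toNat_neg (v j)
  set n : ℕ := ∑ j, z j * g j with hn
  have hfac : z ∈ facs g n := hn.symm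
  have hfac' : z' ∈ facs g n := by
    have : ((∑ j, z' j * g j : ℕ) : ℤ) = ((∑ j, z j * g j : ℕ) : ℤ) := by
      push_cast
      have e : ∀ j : Fin (k+1), (z' j : ℤ) * (g j : ℤ)
          = (z j : ℤ) * (g j : ℤ) + v j * (g j : ℤ) := by
        intro j
        have := hzz' j
        nlinarith [hzz' j]
      simp only [e]
      rw [Finset.sum_add_distrib, hv_g, add_zero]
    have := Nat.cast_injective this
    exact this.trans hn.symm
  have hlen' : ∑ j, z' j = (∑ j, z j) + d := by
    have : ((∑ j, z' j : ℕ) : ℤ) = ((∑ j, z j : ℕ) : ℤ) + (d : ℤ) := by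
      push_cast
      rw [← hv_sum, ← Finset.sum_add_distrib]
      refine Finset.sum_congr rfl fun j _ => ?_
      have := hzz' j
      omega
    exact_mod_cast this
  have hmem1 : (∑ j, z j) ∈ lengthSet g n := ⟨z, hfac, rfl⟩
  have hmem2 : ((∑ j, z j) + d) ∈ lengthSet g n := ⟨z', hfac', hlen'⟩
  have hdmem : d ∈ Delta g := by
    refine Set.mem_iUnion.mpr ⟨n, (∑ j, z j), hmem1, (∑ j, z j) + d, hmem2, ?_, ?_, ?_⟩
    · omega
    · rintro cc hcc ⟨h1, h2⟩
      have := hkey n (∑ j, z j) cc hmem1 hcc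
      obtain ⟨t, ht⟩ := this
      have h3 : 0 < (cc : ℤ) - ((∑ j, z j : ℕ) : ℤ) := by omega
      have h4 : (cc : ℤ) - ((∑ j, z j : ℕ) : ℤ) < (d : ℤ) := by omega
      have h5 : (d : ℤ) ≤ (cc : ℤ) - ((∑ j, z j : ℕ) : ℤ) :=
        Int.le_of_dvd h3 ⟨t, ht⟩
      omega
    · omega
  exact le_antisymm (Nat.sInf_le hdmem) (le_csInf ⟨d, hdmem⟩ hlb)
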